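/- Let R be a path scenario and π an optimal ride with leftIdx(π) < rightIdx(π). Then the ride s₀ ↦ r̂m(π) ↦ left(R) ↦ r̂m(π) followed by π[r̂mIdx(π), len(π)] is also an optimal ride for R. -/

import Mathlib

namespace RideSharing

/-- A ride in a graph with adjacency `adj`: a nonempty sequence of nodes where
consecutive nodes are adjacent. -/
def IsRide (adj : ℕ → ℕ → Prop) (π : List ℕ) : Prop :=
  π ≠ [] ∧ π.Chain' adj

/-- The cost of a ride: sum of the weights of traversed edges. -/
def cost (w : ℕ → ℕ → ℚ) : List ℕ → ℚ
  | [] => 0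
  | [_] => 0
  | a :: b :: rest => w a b + cost w (b :: rest)

/-- A ride satisfies a request `(s,t)` if `s` occurs at a time step weakly before
an occurrence of `t`. -/
def Satisfies (π : List ℕ) (s t : ℕ) : Prop :=
  ∃ i j : ℕ, i ≤ j ∧ π[i]? = some s ∧ π[j]? = some t

/-- `Pre π' π` : `π'` is obtained from `π` by (repeatedly) removing a contiguous
subsequence of nodes (the relation `π' ⪯ π` of the paper, stated with 0-based indices:
`π[1,i] , π[i',len]` becomes `π.take (i+1) ++ π.drop i'`). -/
inductive Pre : List ℕ → List ℕ → Prop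
  | refl (π : List ℕ) : Pre π π
  | step (π' π : List ℕ) (i i' : ℕ) :
      i < i' → i' < π.length →
      (π[i + 1]? = π[i']? ∨ π[i]? = π[i' - 1]?) →
      Pre π' (π.take (i + 1) ++ π.drop i') → Pre π' π

/-- A ride-sharing scenario. -/
structure Scenario where
  adj : ℕ → ℕ → Prop
  w : ℕ → ℕ → ℚ
  s0 : ℕ
  t0 : ℕ
  C : Finset (ℕ × ℕ)

def Feasible (R : Scenario) (π : List ℕ) : Prop :=
  IsRide R.adj π ∧ π.head? = some R.s0 ∧ π.getLast? = some R.t0 ∧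
    ∀ r ∈ R.C, Satisfies π r.1 r.2

def Optimal (R : Scenario) (π : List ℕ) : Prop :=
  Feasible R π ∧ ∀ π', Feasible R π' → cost R.w π ≤ cost R.w π'

/-- The set `V_C` of endpoints of requests. -/
def VC (C : Finset (ℕ × ℕ)) : Finset ℕ := C.image Prod.fst ∪ C.image Prod.snd

/-- The path graph on `{1,…,n}`. -/
def pathAdj (n : ℕ) (a b : ℕ) : Prop :=
  (b = a + 1 ∨ a = b + 1) ∧ 1 ≤ a ∧ a ≤ n ∧ 1 ≤ b ∧ b ≤ n

/-- The monotone segment of the path from `x` to `y`. -/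
def seg (x y : ℕ) : List ℕ :=
  if x ≤ y then (List.range (y - x + 1)).map (fun k => x + k)
  else (List.range (x - y + 1)).map (fun k => x - k)

/-- The ride through a list of waypoints, concatenating monotone segments. -/
def rideThrough : List ℕ → List ℕ
  | [] => []
  | [x] => [x]
  | x :: y :: rest => seg x y ++ (rideThrough (y :: rest)).tail

/-- Concatenation of rides (`π ↦ π'`), inserting the monotone connecting segment
if the endpoints differ. -/
def rconcat (a b : List ℕ) : List ℕ :=
  a ++ (seg (a.getLastD 0) (b.headD 0)).tail ++ b.tail


/-- `leftIdx(π)`: first time step at which `π` reaches `L = left(R)`. -/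
def leftIdx (π : List ℕ) (L : ℕ) : ℕ := π.idxOf L

/-- `rm(π) = max_{1 ≤ i ≤ leftIdx(π)} π_i`. -/
def rm (π : List ℕ) (L : ℕ) : ℕ := (π.take (leftIdx π L + 1)).foldr max 0

/-- `rmIdx(π)`: first time step `i ≥ leftIdx(π)` with `π_i = rm(π)`. -/
def rmIdx (π : List ℕ) (L : ℕ) : ℕ :=
  leftIdx π L + (π.drop (leftIdx π L)).idxOf (rm π L)

/-- `rmLastIdx(π)`: last time step `i ≤ rightIdx(π)` with `π_i = rm(π)`. -/
def rmLastIdx (π : List ℕ) (L Rt : ℕ) : ℕ :=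
  π.idxOf Rt - (π.take (π.idxOf Rt + 1)).reverse.idxOf (rm π L)

/-- `r̂m(π) = max_{rmIdx(π) ≤ i ≤ rmLastIdx(π)} π_i`. -/
def rmHat (π : List ℕ) (L Rt : ℕ) : ℕ :=
  ((π.drop (rmIdx π L)).take (rmLastIdx π L Rt - rmIdx π L + 1)).foldr max 0

/-- `r̂mIdx(π)`: first time step `i ≥ rmLastIdx(π)` with `π_i = r̂m(π)`. -/
def rmHatIdx (π : List ℕ) (L Rt : ℕ) : ℕ :=
  rmLastIdx π L Rt + (π.drop (rmLastIdx π L Rt)).idxOf (rmHat π L Rt)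

/-! ### Auxiliary lemmas -/

section Aux

open List Finset

/-- If `l[q] = x` then the first index of `x` is at most `q`. -/
lemma indexOf_le_of_getElem {l : List ℕ} {x q : ℕ} (hq : q < l.length)
    (h : l[q] = x) : l.idxOf x ≤ q := by
  by_contra hc
  push_neg at hc
  have h2 : q < l.findIdx (· == x) := by simpa [List.idxOf] using hc
  have := List.not_of_lt_findIdx h2
  simp [h] at this

lemma getElem_ne_of_lt_indexOf {l : List ℕ} {x q : ℕ} (hq : q < l.length)
    (hlt : q < l.idxOf x) : l[q] ≠ x :=
  fun h => absurd (indexOf_le_of_getElem hq h) (by omega)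

lemma le_foldr_max {l : List ℕ} {x : ℕ} (h : x ∈ l) : x ≤ l.foldr max 0 := by
  induction l with
  | nil => simp at h
  | cons a t ih =>
    rcases List.mem_cons.1 h with rfl | h
    · exact le_max_left _ _
    · exact le_trans (ih h) (le_max_right _ _)

lemma foldr_max_mem {l : List ℕ} (h : l ≠ []) : l.foldr max 0 ∈ l := by
  induction l with
  | nil => exact absurd rfl h
  | cons a t ih =>
    cases t with
    | nil => simp
    | cons b t' =>
      have hfold : (a :: b :: t').foldr max 0 = max a ((b :: t').foldr max 0) := rfl
      rw [hfold]
      rcases le_total a ((b :: t').foldr max 0) with h' | h'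
      · rw [max_eq_right h']
        exact List.mem_cons_of_mem _ (ih (by simp))
      · rw [max_eq_left h']
        exact List.mem_cons_self

/-- Upward crossing lemma for walks with unit steps. -/
lemma up_cross (f : ℕ → ℕ) (k : ℕ) {i j : ℕ} (hij : i ≤ j)
    (hstep : ∀ p, i ≤ p → p < j → f (p+1) = f p + 1 ∨ f p = f (p+1) + 1)
    (hi : f i ≤ k) (hj : k < f j) :
    ∃ p, i ≤ p ∧ p < j ∧ f p = k ∧ f (p+1) = k + 1 := by
  revert hstep hj
  induction j, hij using Nat.le_induction with
  | base => intro _ hj; omega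
  | succ m him ih =>
    intro hstep hj
    by_cases hm : k < f m
    · obtain ⟨p, h1, h2, h3⟩ := ih (fun p hp1 hp2 => hstep p hp1 (by omega)) hm
      exact ⟨p, h1, by omega, h3⟩
    · push_neg at hm
      rcases hstep m him (by omega) with h | h
      · exact ⟨m, him, by omega, by omega, by omega⟩
      · omega

/-- Downward crossing lemma for walks with unit steps. -/
lemma down_cross (f : ℕ → ℕ) (k : ℕ) {i j : ℕ} (hij : i ≤ j)
    (hstep : ∀ p, i ≤ p → p < j → f (p+1) = f p + 1 ∨ f p = f (p+1) + 1)
    (hi : k < f i) (hj : f j ≤ k) :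
    ∃ p, i ≤ p ∧ p < j ∧ f p = k + 1 ∧ f (p+1) = k := by
  revert hstep hj
  induction j, hij using Nat.le_induction with
  | base => intro _ hj; omega
  | succ m him ih =>
    intro hstep hj
    by_cases hm : f m ≤ k
    · obtain ⟨p, h1, h2, h3⟩ := ih (fun p hp1 hp2 => hstep p hp1 (by omega)) hm
      exact ⟨p, h1, by omega, h3⟩
    · push_neg at hm
      rcases hstep m him (by omega) with h | h
      · omega
      · exact ⟨m, him, by omega, by omega, by omega⟩

lemma ivt_up (f : ℕ → ℕ) (v : ℕ) {i j : ℕ} (hij : i ≤ j)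
    (hstep : ∀ p, i ≤ p → p < j → f (p+1) = f p + 1 ∨ f p = f (p+1) + 1)
    (hi : f i ≤ v) (hj : v ≤ f j) :
    ∃ p, i ≤ p ∧ p ≤ j ∧ f p = v := by
  rcases eq_or_lt_of_le hi with h | h
  · exact ⟨i, le_refl i, hij, h⟩
  · obtain ⟨p, h1, h2, _, h4⟩ := up_cross f (v-1) hij hstep (by omega) (by omega)
    exact ⟨p+1, by omega, by omega, by omega⟩

lemma ivt_down (f : ℕ → ℕ) (v : ℕ) {i j : ℕ} (hij : i ≤ j)
    (hstep : ∀ p, i ≤ p → p < j → f (p+1) = f p + 1 ∨ f p = f (p+1) + 1)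
    (hi : v ≤ f i) (hj : f j ≤ v) :
    ∃ p, i ≤ p ∧ p ≤ j ∧ f p = v := by
  rcases eq_or_lt_of_le hj with h | h
  · exact ⟨j, hij, le_refl j, h⟩
  · obtain ⟨p, h1, h2, h3, _⟩ := down_cross f (v-1) hij hstep (by omega) (by omega)
    exact ⟨p, h1, by omega, by omega⟩

/-! ### cost lemmas -/

lemma cost_eq_sum (w : ℕ → ℕ → ℚ) : ∀ (l : List ℕ),
    cost w l = ∑ p ∈ Finset.range (l.length - 1), w (l.getD p 0) (l.getD (p+1) 0)
  | [] => by simp [cost]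
  | [a] => by simp [cost]
  | a :: b :: r => by
    have h0 : cost w (a :: b :: r) = w a b + cost w (b :: r) := rfl
    have h1 : (a :: b :: r).length - 1 = ((b :: r).length - 1) + 1 := by simp
    rw [h0, h1, Finset.sum_range_succ', cost_eq_sum w (b :: r)]
    simp only [List.getD_cons_succ, List.getD_cons_zero]
    ring

lemma cost_glue (w : ℕ → ℕ → ℚ) : ∀ (x y : List ℕ), y ≠ [] → x.getLast? = y.head? →
    cost w (x ++ y.tail) = cost w x + cost w y
  | [], y, hy, h => by
    rw [List.getLast?_nil] at h
    cases y with
    | nil => exact absurd rfl hy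
    | cons b t => simp at h
  | [a], y, hy, h => by
    cases y with
    | nil => exact absurd rfl hy
    | cons b t =>
      simp only [List.getLast?_singleton, List.head?_cons, Option.some.injEq] at h
      subst h
      show cost w (a :: t) = cost w [a] + cost w (a :: t)
      simp [cost]
  | a :: c :: x', y, hy, h => by
    have ih := cost_glue w (c :: x') y hy (by simpa using h)
    show w a c + cost w ((c :: x') ++ y.tail) = (w a c + cost w (c :: x')) + cost w y
    rw [ih]; ring

lemma ne_nil_of_head?' {l : List ℕ} {a : ℕ} (h : l.head? = some a) : l ≠ [] := by
  rintro rfl; simp at h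

lemma cost_reverse (w : ℕ → ℕ → ℚ) (hwsym : ∀ a b, w a b = w b a) :
    ∀ (l : List ℕ), cost w l.reverse = cost w l
  | [] => rfl
  | [a] => rfl
  | a :: c :: x' => by
    have ih := cost_reverse w hwsym (c :: x')
    have h1 : (a :: c :: x').reverse = (c :: x').reverse ++ [a] := by simp
    have h2 : ((c :: x').reverse).getLast? = ([c, a] : List ℕ).head? := by
      rw [List.getLast?_reverse]; rfl
    have h3 : cost w ((c :: x').reverse ++ ([c, a] : List ℕ).tail)
        = cost w ((c :: x').reverse) + cost w [c, a] :=
      cost_glue w _ _ (by simp) h2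
    rw [h1]
    show cost w ((c :: x').reverse ++ ([c, a] : List ℕ).tail) = cost w (a :: c :: x')
    rw [h3, ih]
    show cost w (c :: x') + (w c a + cost w [a]) = w a c + cost w (c :: x')
    simp [cost, hwsym c a]
    ring

/-! ### asc and seg lemmas -/

/-- The ascending segment `[a, a+1, …, a+m]`. -/
def asc (a m : ℕ) : List ℕ := (List.range (m+1)).map (a + ·)

lemma asc_zero (a : ℕ) : asc a 0 = [a] := rfl

lemma asc_succ (a m : ℕ) : asc a (m+1) = a :: asc (a+1) m := by
  unfold asc
  rw [List.range_succ_eq_map, List.map_cons, List.map_map]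
  have h : ((a + ·) ∘ Nat.succ) = ((a+1) + ·) := by
    funext k; simp [Function.comp]; omega
  rw [h]
  simp

lemma asc_snoc (a m : ℕ) : asc a (m+1) = asc a m ++ [a + (m+1)] := by
  unfold asc
  rw [List.range_succ, List.map_append]
  rfl

lemma head?_asc (a m : ℕ) : (asc a m).head? = some a := by
  cases m with
  | zero => rfl
  | succ m => rw [asc_succ]; rfl

lemma getLast?_asc (a m : ℕ) : (asc a m).getLast? = some (a + m) := by
  cases m with
  | zero => rfl
  | succ m => rw [asc_snoc, List.getLast?_concat]

lemma mem_asc {z a m : ℕ} : z ∈ asc a m ↔ a ≤ z ∧ z ≤ a + m := by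
  unfold asc
  simp only [List.mem_map, List.mem_range]
  constructor
  · rintro ⟨k, hk, rfl⟩; omega
  · rintro ⟨h1, h2⟩; exact ⟨z - a, by omega, by omega⟩

lemma chain'_asc {n : ℕ} : ∀ (m a : ℕ), 1 ≤ a → a + m ≤ n →
    List.Chain' (pathAdj n) (asc a m)
  | 0, a, _, _ => by rw [asc_zero]; exact List.isChain_singleton a
  | (m+1), a, h1, h2 => by
    rw [asc_succ, List.Chain', List.isChain_cons]
    refine ⟨?_, chain'_asc m (a+1) (by omega) (by omega)⟩
    intro y hy
    rw [head?_asc] at hy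
    simp only [Option.mem_def, Option.some.injEq] at hy
    subst hy
    exact ⟨Or.inl rfl, by omega, by omega, by omega, by omega⟩

lemma cost_asc (w : ℕ → ℕ → ℚ) : ∀ (m a : ℕ),
    cost w (asc a m) = ∑ k ∈ Finset.Ico a (a+m), w k (k+1)
  | 0, a => by simp [asc_zero, cost]
  | (m+1), a => by
    rw [asc_succ]
    obtain ⟨t, ht⟩ : ∃ t, asc (a+1) m = (a+1) :: t := by
      cases m with
      | zero => exact ⟨[], rfl⟩
      | succ m => exact ⟨_, asc_succ _ _⟩
    rw [ht]
    show w a (a+1) + cost w ((a+1) :: t) = _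
    rw [← ht, cost_asc w m (a+1), Finset.sum_eq_sum_Ico_succ_bot (show a < a + (m+1) from by omega),
      show a + 1 + m = a + (m+1) from by omega]

lemma seg_asc {x y : ℕ} (h : x ≤ y) : seg x y = asc x (y - x) := by
  unfold seg asc
  rw [if_pos h]

lemma seg_desc : ∀ (m x y : ℕ), x = y + m → seg x y = (asc y m).reverse
  | 0, x, y, h => by
    have hxy : x = y := by omega
    subst hxy
    rw [seg_asc (le_refl _), Nat.sub_self, asc_zero]
    simp
  | (m+1), x, y, h => by
    have hgt : ¬ x ≤ y := by omega
    have h1 : seg x y = seg x (y+1) ++ [y] := by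
      unfold seg
      rw [if_neg hgt]
      by_cases h2 : x ≤ y + 1
      · have hx : x = y + 1 := by omega
        rw [if_pos h2]
        rw [show x - y + 1 = 2 from by omega, show y + 1 - x + 1 = 1 from by omega]
        rw [show (2:ℕ) = 1 + 1 from rfl, List.range_succ, List.map_append]
        simp [hx]
      · rw [if_neg h2]
        rw [show x - y + 1 = (x - (y+1) + 1) + 1 from by omega, List.range_succ,
          List.map_append]
        simp only [List.map_cons, List.map_nil]
        congr 2
        omega
    rw [h1, seg_desc m x (y+1) (by omega), asc_succ, List.reverse_cons]

lemma seg_self (x : ℕ) : seg x x = [x] := by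
  rw [seg_asc (le_refl x), Nat.sub_self, asc_zero]

lemma head?_seg (x y : ℕ) : (seg x y).head? = some x := by
  rcases le_total x y with h | h
  · rw [seg_asc h, head?_asc]
  · rw [seg_desc (x - y) x y (by omega), List.head?_reverse, getLast?_asc]
    congr 1
    omega

lemma getLast?_seg (x y : ℕ) : (seg x y).getLast? = some y := by
  rcases le_total x y with h | h
  · rw [seg_asc h, getLast?_asc]
    congr 1
    omega
  · rw [seg_desc (x - y) x y (by omega), List.getLast?_reverse, head?_asc]

lemma seg_ne_nil (x y : ℕ) : seg x y ≠ [] := by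
  intro h
  have := head?_seg x y
  rw [h] at this
  simp at this

lemma mem_seg {z x y : ℕ} : z ∈ seg x y ↔ min x y ≤ z ∧ z ≤ max x y := by
  rcases le_total x y with h | h
  · rw [seg_asc h, mem_asc]
    omega
  · rw [seg_desc (x - y) x y (by omega), List.mem_reverse, mem_asc]
    omega

lemma pathAdj_symm {n a b : ℕ} (h : pathAdj n a b) : pathAdj n b a :=
  ⟨h.1.symm, h.2.2.2.1, h.2.2.2.2, h.2.1, h.2.2.1⟩

lemma chain'_seg {n x y : ℕ} (h1 : 1 ≤ x) (h2 : x ≤ n) (h3 : 1 ≤ y) (h4 : y ≤ n) :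
    List.Chain' (pathAdj n) (seg x y) := by
  rcases le_total x y with h | h
  · rw [seg_asc h]
    exact chain'_asc _ _ h1 (by omega)
  · rw [seg_desc (x - y) x y (by omega), List.Chain', List.isChain_reverse]
    exact (chain'_asc (x - y) y h3 (by omega)).imp (fun a b hab => pathAdj_symm hab)

lemma cost_seg (w : ℕ → ℕ → ℚ) (hwsym : ∀ a b, w a b = w b a) (x y : ℕ) :
    cost w (seg x y) = ∑ k ∈ Finset.Ico (min x y) (max x y), w k (k+1) := by
  rcases le_total x y with h | h
  · rw [seg_asc h, cost_asc, min_eq_left h, max_eq_right h,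
      show x + (y - x) = y from by omega]
  · rw [seg_desc (x - y) x y (by omega), cost_reverse w hwsym, cost_asc,
      min_eq_right h, max_eq_left h, show y + (x - y) = x from by omega]

lemma tail_seg_desc {x y : ℕ} (h : y < x) : (seg x y).tail = seg (x-1) y := by
  rw [seg_desc (x - y) x y (by omega), show x - y = (x - y - 1) + 1 from by omega,
    asc_snoc, List.reverse_concat, List.tail_cons,
    ← seg_desc (x - y - 1) (x - 1) y (by omega)]

lemma tail_seg_asc {x y : ℕ} (h : x < y) : (seg x y).tail = seg (x+1) y := by
  rw [seg_asc h.le, show y - x = (y - x - 1) + 1 from by omega, asc_succ, List.tail_cons,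
    seg_asc (show x + 1 ≤ y from by omega), show y - (x+1) = y - x - 1 from by omega]

/-! ### glue lemmas -/

lemma getLast?_glue {x y : List ℕ} (h : x.getLast? = y.head?) :
    (x ++ y.tail).getLast? = y.getLast? := by
  cases y with
  | nil =>
    simp only [List.head?_nil] at h
    have : x = [] := List.getLast?_eq_none_iff.1 h
    subst this
    rfl
  | cons b t =>
    cases t with
    | nil => simpa using h
    | cons c t' =>
      rw [List.tail_cons, List.getLast?_append, List.getLast?_cons_cons]
      obtain ⟨z, hz⟩ : ∃ z, (c :: t').getLast? = some z :=
        Option.isSome_iff_exists.1 (List.getLast?_isSome.2 (by simp))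
      rw [hz]
      rfl

lemma chain'_glue {R : ℕ → ℕ → Prop} {x y : List ℕ} (h : x.getLast? = y.head?)
    (hx : List.Chain' R x) (hy : List.Chain' R y) : List.Chain' R (x ++ y.tail) := by
  cases y with
  | nil => simpa using hx
  | cons b t =>
    refine List.IsChain.append hx hy.tail ?_
    intro u hu v hv
    rw [h] at hu
    simp only [List.head?_cons, Option.mem_def, Option.some.injEq] at hu
    subst hu
    exact (List.isChain_cons.1 hy).1 v hv

/-! ### Satisfies helpers -/

lemma satisfies_append_of_mem_getElem? {x z : List ℕ} {s t : ℕ} (hs : s ∈ x) {q : ℕ}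
    (ht : z[q]? = some t) : Satisfies (x ++ z) s t := by
  obtain ⟨i, hi, his⟩ := List.mem_iff_getElem.1 hs
  refine ⟨i, x.length + q, by omega, ?_, ?_⟩
  · rw [List.getElem?_append_left hi, List.getElem?_eq_getElem hi, his]
  · rw [List.getElem?_append_right (by omega), show x.length + q - x.length = q from by omega]
    exact ht

lemma satisfies_append_of_mem_mem {x z : List ℕ} {s t : ℕ} (hs : s ∈ x) (ht : t ∈ z) :
    Satisfies (x ++ z) s t := by
  obtain ⟨q, hq, hqt⟩ := List.mem_iff_getElem.1 ht
  exact satisfies_append_of_mem_getElem? hs (by rw [List.getElem?_eq_getElem hq, hqt])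

lemma satisfies_append_of_mem_last {x z : List ℕ} {s t : ℕ} (hs : s ∈ x)
    (hlast : x.getLast? = some t) : Satisfies (x ++ z) s t := by
  obtain ⟨i, hi, his⟩ := List.mem_iff_getElem.1 hs
  refine ⟨i, x.length - 1, by omega, ?_, ?_⟩
  · rw [List.getElem?_append_left hi, List.getElem?_eq_getElem hi, his]
  · rw [List.getElem?_append_left (by omega), ← List.getLast?_eq_getElem?]
    exact hlast

lemma satisfies_suffix {x z : List ℕ} {s t : ℕ} {i j : ℕ} (hij : i ≤ j)
    (hi : z[i]? = some s) (hj : z[j]? = some t) : Satisfies (x ++ z) s t := by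
  refine ⟨x.length + i, x.length + j, by omega, ?_, ?_⟩
  · rw [List.getElem?_append_right (by omega), show x.length + i - x.length = i from by omega]
    exact hi
  · rw [List.getElem?_append_right (by omega), show x.length + j - x.length = j from by omega]
    exact hj

/-! ### take/drop helpers -/

lemma getLast?_take' {l : List ℕ} {d : ℕ} (hd : d < l.length) :
    (l.take (d+1)).getLast? = some l[d] := by
  have hlen : (l.take (d+1)).length = d+1 := by rw [List.length_take]; omega
  rw [List.getLast?_eq_getElem?, hlen, Nat.add_sub_cancel,
    List.getElem?_eq_getElem (by omega : d < (l.take (d+1)).length), List.getElem_take]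

lemma head?_drop' {l : List ℕ} {d : ℕ} (hd : d < l.length) :
    (l.drop d).head? = some l[d] := by
  rw [List.drop_eq_getElem_cons hd]
  rfl

lemma getLast?_drop' {l : List ℕ} {d : ℕ} (hd : d < l.length) :
    (l.drop d).getLast? = l.getLast? := by
  rw [List.getLast?_eq_getElem?, List.getLast?_eq_getElem?, List.length_drop,
    List.getElem?_drop, show d + (l.length - d - 1) = l.length - 1 from by omega]

lemma getD_take' {l : List ℕ} {d p : ℕ} (hd : d < l.length) (hp : p ≤ d) :
    (l.take (d+1)).getD p 0 = l.getD p 0 := by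
  have h1 : p < (l.take (d+1)).length := by rw [List.length_take]; omega
  rw [List.getD_eq_getElem _ _ h1, List.getElem_take, List.getD_eq_getElem _ _ (by omega)]

lemma mem_of_getElem?' {l : List ℕ} {i v : ℕ} (h : l[i]? = some v) : v ∈ l := by
  obtain ⟨h1, h2⟩ := List.getElem?_eq_some_iff.1 h
  exact h2 ▸ List.getElem_mem h1

end Aux

set_option maxHeartbeats 3200000 in
/-- if `π` is optimal with `leftIdx(π) < rightIdx(π)`, then the ride
`s₀ ↦ r̂m(π) ↦ left(R) ↦ r̂m(π)` followed by `π[r̂mIdx(π), len(π)]` is optimal, too. -/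
theorem prefix_normalization_optimal (n : ℕ) (w : ℕ → ℕ → ℚ)
    (hwsym : ∀ a b, w a b = w b a) (hwpos : ∀ a b, 0 < w a b)
    (s0 t0 : ℕ) (C : Finset (ℕ × ℕ)) (L Rt : ℕ)
    (hL : IsLeast {v | v ∈ VC C} L) (hR : IsGreatest {v | v ∈ VC C} Rt)
    (π : List ℕ) (hopt : Optimal ⟨pathAdj n, w, s0, t0, C⟩ π)
    (hlr : leftIdx π L < π.idxOf Rt) :
    Optimal ⟨pathAdj n, w, s0, t0, C⟩
      (rconcat (rideThrough [s0, rmHat π L Rt, L, rmHat π L Rt])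
        (π.drop (rmHatIdx π L Rt))) := by
  classical
  obtain ⟨⟨⟨hne, hchain⟩, hhead, hlast, hsatC⟩, hmin⟩ := hopt
  set N := π.length with hN
  set f : ℕ → ℕ := fun i => π.getD i 0 with hf
  have hfget : ∀ {p : ℕ}, p < N → f p = π.getD p 0 := fun {p} _ => rfl
  have hfgetE : ∀ {p : ℕ} (hp : p < N), f p = π[p] :=
    fun {p} hp => List.getD_eq_getElem _ _ hp
  have hfsome : ∀ {p : ℕ}, p < N → π[p]? = some (f p) := by
    intro p hp
    rw [List.getElem?_eq_getElem hp, hfgetE hp]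
  -- basic endpoints
  have h0N : 0 < N := List.length_pos_iff.2 hne
  have hf0 : f 0 = s0 := by
    have h := hhead
    rw [List.head?_eq_getElem?, List.getElem?_eq_getElem h0N] at h
    rw [hfgetE h0N]
    exact Option.some.inj h
  -- L and Rt occur in π, set up indices
  set l := π.idxOf L with hldef
  set r := π.idxOf Rt with hrdef
  have hlr' : l < r := hlr
  -- every element of VC occurs in π
  have hVCmem : ∀ v ∈ VC C, v ∈ π := by
    intro v hv
    rw [VC, Finset.mem_union] at hv
    rcases hv with hv | hv <;> obtain ⟨req, hreq, heq⟩ := Finset.mem_image.1 hv <;>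
      obtain ⟨i, j, hij, hi, hj⟩ := hsatC req hreq
    · exact heq ▸ mem_of_getElem?' hi
    · exact heq ▸ mem_of_getElem?' hj
  have hRtmem : Rt ∈ π := hVCmem Rt hR.1
  have hrN : r < N := List.idxOf_lt_length_iff.2 hRtmem
  have hlN : l < N := by omega
  have hfr : f r = Rt := by rw [hfgetE hrN]; exact List.getElem_idxOf hrN
  have hfl : f l = L := by rw [hfgetE hlN]; exact List.getElem_idxOf hlN
  have hrmin : ∀ j, j < r → f j ≠ Rt := by
    intro j hj
    rw [hfgetE (by omega)]
    exact getElem_ne_of_lt_indexOf (by omega) hj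
  have hN2 : 2 ≤ N := by omega
  -- adjacency facts
  have hadj : ∀ p, p + 1 < N → pathAdj n (f p) (f (p+1)) := by
    have hc := List.isChain_iff_getElem.1 hchain
    intro p hp
    have h := hc p (by omega)
    rw [hfgetE (by omega : p < N), hfgetE hp]
    exact h
  have hstepN : ∀ p, p + 1 < N → (f (p+1) = f p + 1 ∨ f p = f (p+1) + 1) :=
    fun p hp => (hadj p hp).1
  have hbound : ∀ p, p < N → 1 ≤ f p ∧ f p ≤ n := by
    intro p hp
    by_cases hp1 : p + 1 < N
    · exact ⟨(hadj p hp1).2.1, (hadj p hp1).2.2.1⟩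
    · have hp2 : p - 1 + 1 < N := by omega
      have h := hadj (p-1) hp2
      rw [show p - 1 + 1 = p from by omega] at h
      exact ⟨h.2.2.2.1, h.2.2.2.2⟩
  have hLRt : L ≤ Rt := hR.2 hL.1
  -- nothing above Rt before time r
  have hs0Rt : s0 ≤ Rt := by
    by_contra hc
    push_neg at hc
    obtain ⟨p, hp1, hp2, hp3⟩ := ivt_down f Rt (show (0:ℕ) ≤ l from by omega)
      (fun p _ hp => hstepN p (by omega)) (by omega) (by rw [hfl]; omega)
    exact hrmin p (by omega) hp3
  have hFle : ∀ j, j ≤ r → f j ≤ Rt := by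
    intro j hj
    by_contra hc
    push_neg at hc
    obtain ⟨p, hp1, hp2, hp3⟩ := ivt_up f Rt (show (0:ℕ) ≤ j from by omega)
      (fun p _ hp => hstepN p (by omega)) (by omega) (by omega)
    have hpr : p < r := by
      by_contra hge
      push_neg at hge
      have hjr : j = r := by omega
      rw [hjr, hfr] at hc
      omega
    exact hrmin p hpr hp3
  -- rm facts
  set rv := rm π L with hrvdef
  have hrvfold : rv = (π.take (l+1)).foldr max 0 := rfl
  have htakelen : (π.take (l+1)).length = l + 1 := by rw [List.length_take]; omega
  have htakeget : ∀ (q : ℕ), q ≤ l → ∀ (h2 : q < (π.take (l+1)).length),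
      (π.take (l+1))[q] = f q := by
    intro q hq h2
    rw [List.getElem_take]
    exact (hfgetE (show q < N from by omega)).symm
  have hrm_ge : ∀ q, q ≤ l → f q ≤ rv := by
    intro q hq
    rw [hrvfold]
    apply le_foldr_max
    have h2 : q < (π.take (l+1)).length := by omega
    rw [← htakeget q hq h2]
    exact List.getElem_mem h2
  obtain ⟨a, hal, hfa⟩ : ∃ a, a ≤ l ∧ f a = rv := by
    have hmem := foldr_max_mem (l := π.take (l+1)) (by
      intro h; rw [h] at htakelen; simp at htakelen)
    rw [← hrvfold] at hmem
    obtain ⟨q, hq, hqe⟩ := List.mem_iff_getElem.1 hmem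
    rw [htakelen] at hq
    refine ⟨q, by omega, ?_⟩
    rw [← htakeget q (by omega) (by omega)]
    exact hqe
  have hs0rv : s0 ≤ rv := hf0 ▸ hrm_ge 0 (by omega)
  have hLrv : L ≤ rv := hfl ▸ hrm_ge l (le_refl l)
  have hrvRt : rv ≤ Rt := hfa ▸ hFle a (by omega)
  -- rmIdx facts
  obtain ⟨p0, hp0l, hp0r, hp0v⟩ : ∃ p, l ≤ p ∧ p ≤ r ∧ f p = rv :=
    ivt_up f rv (show l ≤ r from by omega) (fun p _ hp => hstepN p (by omega))
      (by rw [hfl]; omega) (by rw [hfr]; omega)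
  have hrvdrop : rv ∈ π.drop l := by
    rw [List.mem_iff_getElem]
    refine ⟨p0 - l, by rw [List.length_drop]; omega, ?_⟩
    rw [List.getElem_drop, ← hfgetE (show l + (p0 - l) < N from by omega),
      show l + (p0 - l) = p0 from by omega]
    exact hp0v
  set m1 := rmIdx π L with hm1def
  have hm1eq : m1 = l + (π.drop l).idxOf rv := rfl
  have hidx1 : (π.drop l).idxOf rv < (π.drop l).length := List.idxOf_lt_length_iff.2 hrvdrop
  have hdroplen : (π.drop l).length = N - l := List.length_drop
  have hm1N : m1 < N := by rw [hm1eq]; omega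
  have hlm1 : l ≤ m1 := by rw [hm1eq]; omega
  have hfm1 : f m1 = rv := by
    have h1 := List.getElem_idxOf hidx1
    rw [List.getElem_drop] at h1
    rw [hm1eq, hfgetE (show l + (π.drop l).idxOf rv < N from by omega)]
    exact h1
  have hm1r : m1 ≤ r := by
    have : (π.drop l).idxOf rv ≤ p0 - l := by
      apply indexOf_le_of_getElem (show p0 - l < (π.drop l).length from by omega)
      rw [List.getElem_drop, ← hfgetE (show l + (p0 - l) < N from by omega),
        show l + (p0 - l) = p0 from by omega]
      exact hp0v
    rw [hm1eq]; omega
  have hm1min : ∀ j, l ≤ j → j < m1 → f j ≠ rv := by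
    intro j hj1 hj2 hc
    have h1 : j - l < (π.drop l).idxOf rv := by rw [hm1eq] at hj2; omega
    have h2 : j - l < (π.drop l).length := by omega
    apply getElem_ne_of_lt_indexOf h2 h1
    rw [List.getElem_drop, ← hfgetE (show l + (j - l) < N from by omega),
      show l + (j - l) = j from by omega]
    exact hc
  -- rmLastIdx facts
  set m2 := rmLastIdx π L Rt with hm2def
  set T := (π.take (r+1)).reverse with hTdef
  have hm2eq : m2 = r - T.idxOf rv := rfl
  have hTlen : T.length = r + 1 := by
    rw [hTdef, List.length_reverse, List.length_take]; omega
  have hTget : ∀ (q : ℕ), q ≤ r → ∀ (h2 : q < T.length), T[q] = f (r - q) := by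
    intro q hq h2
    show ((π.take (r+1)).reverse)[q]'(by
      rw [List.length_reverse, List.length_take]; omega) = f (r - q)
    rw [List.getElem_reverse, List.getElem_take,
      ← hfgetE (show (π.take (r+1)).length - 1 - q < N from by rw [List.length_take]; omega),
      show (π.take (r+1)).length - 1 - q = r - q from by rw [List.length_take]; omega]
  have hrvT : T.idxOf rv ≤ r - m1 := by
    apply indexOf_le_of_getElem (show r - m1 < T.length from by omega)
    rw [hTget _ (by omega) (by omega), show r - (r - m1) = m1 from by omega]
    exact hfm1
  have hm1m2 : m1 ≤ m2 := by rw [hm2eq]; omega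
  have hm2r : m2 ≤ r := by rw [hm2eq]; omega
  have hm2N : m2 < N := by omega
  have hfm2 : f m2 = rv := by
    have hq : T.idxOf rv < T.length := by rw [hTlen]; omega
    have h1 := List.getElem_idxOf hq
    rw [hTget _ (by omega) hq] at h1
    rw [hm2eq]
    exact h1
  have hm2max : ∀ j, m2 < j → j ≤ r → f j ≠ rv := by
    intro j hj1 hj2 hc
    have h1 : r - j < T.idxOf rv := by rw [hm2eq] at hj1; omega
    apply getElem_ne_of_lt_indexOf (show r - j < T.length from by omega) h1
    rw [hTget _ (by omega) (by omega), show r - (r - j) = j from by omega]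
    exact hc
  -- rmHat facts
  set M := rmHat π L Rt with hMdef
  set W := (π.drop m1).take (m2 - m1 + 1) with hWdef
  have hMfold : M = W.foldr max 0 := rfl
  have hWlen : W.length = m2 - m1 + 1 := by
    rw [hWdef, List.length_take, List.length_drop]
    omega
  have hWget : ∀ (q : ℕ), q ≤ m2 - m1 → ∀ (h2 : q < W.length), W[q] = f (m1 + q) := by
    intro q hq h2
    show ((π.drop m1).take (m2 - m1 + 1))[q]'(by
      rw [List.length_take, List.length_drop]; omega) = f (m1 + q)
    rw [List.getElem_take, List.getElem_drop]
    exact (hfgetE (show m1 + q < N from by omega)).symm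
  have hWge : ∀ j, m1 ≤ j → j ≤ m2 → f j ≤ M := by
    intro j hj1 hj2
    rw [hMfold]
    apply le_foldr_max
    have h2 : j - m1 < W.length := by rw [hWlen]; omega
    have h1 : W[j - m1] = f j := by
      rw [hWget (j - m1) (by omega) h2]
      congr 1
      omega
    rw [← h1]
    exact List.getElem_mem h2
  obtain ⟨js, hjs1, hjs2, hfjs⟩ : ∃ js, m1 ≤ js ∧ js ≤ m2 ∧ f js = M := by
    have hmem := foldr_max_mem (l := W) (by intro h; rw [h] at hWlen; simp at hWlen)
    rw [← hMfold] at hmem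
    obtain ⟨q, hq, hqe⟩ := List.mem_iff_getElem.1 hmem
    rw [hWlen] at hq
    refine ⟨m1 + q, by omega, by omega, ?_⟩
    rw [← hWget q (by omega) (by omega)]
    exact hqe
  have hrvM : rv ≤ M := by
    have := hWge m1 (le_refl m1) hm1m2
    omega
  have hMRt : M ≤ Rt := hfjs ▸ hFle js (by omega)
  have hLM : L ≤ M := by omega
  have hs0M : s0 ≤ M := by omega
  -- rmHatIdx facts
  set d := rmHatIdx π L Rt with hddef
  have hdeq : d = m2 + (π.drop m2).idxOf M := rfl
  obtain ⟨p1, hp11, hp12, hp13⟩ : ∃ p, m2 ≤ p ∧ p ≤ r ∧ f p = M :=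
    ivt_up f M (show m2 ≤ r from hm2r) (fun p _ hp => hstepN p (by omega))
      (by rw [hfm2]; omega) (by rw [hfr]; omega)
  have hMdrop : M ∈ π.drop m2 := by
    rw [List.mem_iff_getElem]
    refine ⟨p1 - m2, by rw [List.length_drop]; omega, ?_⟩
    rw [List.getElem_drop, ← hfgetE (show m2 + (p1 - m2) < N from by omega),
      show m2 + (p1 - m2) = p1 from by omega]
    exact hp13
  have hidx2 : (π.drop m2).idxOf M < (π.drop m2).length := List.idxOf_lt_length_iff.2 hMdrop
  have hm2d : m2 ≤ d := by rw [hdeq]; omega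
  have hdr : d ≤ r := by
    have : (π.drop m2).idxOf M ≤ p1 - m2 := by
      apply indexOf_le_of_getElem (show p1 - m2 < (π.drop m2).length from by
        rw [List.length_drop]; omega)
      rw [List.getElem_drop, ← hfgetE (show m2 + (p1 - m2) < N from by omega),
        show m2 + (p1 - m2) = p1 from by omega]
      exact hp13
    rw [hdeq]; omega
  have hdN : d < N := by omega
  have hfd : f d = M := by
    have h1 := List.getElem_idxOf hidx2
    rw [List.getElem_drop] at h1
    rw [hdeq, hfgetE (show m2 + (π.drop m2).idxOf M < N from by
      rw [List.length_drop] at hidx2; omega)]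
    exact h1
  have hdmin : ∀ j, m2 ≤ j → j < d → f j ≠ M := by
    intro j hj1 hj2 hc
    have h1 : j - m2 < (π.drop m2).idxOf M := by rw [hdeq] at hj2; omega
    have h2 : j - m2 < (π.drop m2).length := by rw [List.length_drop]; omega
    apply getElem_ne_of_lt_indexOf h2 h1
    rw [List.getElem_drop, ← hfgetE (show m2 + (j - m2) < N from by omega),
      show m2 + (j - m2) = j from by omega]
    exact hc
  -- everything before d is at most M
  have hup : ∀ i, i ≤ d → f i ≤ M := by
    intro i hi
    rcases Nat.le_total i l with h1 | h1
    · have := hrm_ge i h1; omega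
    · rcases Nat.le_total i m1 with h2 | h2
      · by_contra hc
        push_neg at hc
        obtain ⟨p, hq1, hq2, hq3⟩ := ivt_up f rv (show l ≤ i from h1)
          (fun p _ hp => hstepN p (by omega)) (by rw [hfl]; omega) (by omega)
        rcases Nat.lt_or_ge p m1 with h3 | h3
        · exact hm1min p hq1 h3 hq3
        · have hpm1 : p = m1 := by omega
          have him1 : i = m1 := by omega
          rw [him1] at hc
          rw [hfm1] at *
          omega
      · rcases Nat.le_total i m2 with h3 | h3
        · exact hWge i h2 h3
        · by_contra hc
          push_neg at hc
          obtain ⟨p, hq1, hq2, hq3⟩ := ivt_up f M (show m2 ≤ i from h3)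
            (fun p _ hp => hstepN p (by omega)) (by rw [hfm2]; omega) (by omega)
          rcases Nat.lt_or_ge p d with h4 | h4
          · exact hdmin p hq1 h4 hq3
          · have hpd : p = d := by omega
            have hid : i = d := by omega
            rw [hid] at hc
            rw [hfd] at hc
            omega
  -- elements of π are in [1, n]
  have hs0n : 1 ≤ s0 ∧ s0 ≤ n := hf0 ▸ hbound 0 h0N
  have hLn : 1 ≤ L ∧ L ≤ n := hfl ▸ hbound l hlN
  have hMn : 1 ≤ M ∧ M ≤ n := hfd ▸ hbound d hdN
  -- The new prefix P and its decomposition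
  set P := rideThrough [s0, M, L, M] with hPdef
  set X := seg s0 M ++ (seg M L).tail with hXdef
  have hsegML : seg M L = M :: (seg M L).tail := by
    symm
    apply List.cons_head?_tail
    rw [head?_seg]
    rfl
  have hPX : P = X ++ (seg L M).tail := by
    rw [hPdef]
    show seg s0 M ++ (rideThrough [M, L, M]).tail = X ++ (seg L M).tail
    have h1 : rideThrough [M, L, M] = seg M L ++ (seg L M).tail := by
      show seg M L ++ (rideThrough [L, M]).tail = _
      have : rideThrough [L, M] = seg L M ++ (rideThrough [M]).tail := rfl
      rw [this]
      show seg M L ++ (seg L M ++ ([M] : List ℕ).tail).tail = _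
      rw [show ([M] : List ℕ).tail = [] from rfl, List.append_nil]
    rw [h1]
    conv_lhs => rw [hsegML]
    rw [List.cons_append, List.tail_cons, hXdef, List.append_assoc]
  -- glue facts for X and P
  have hglue1 : (seg s0 M).getLast? = (seg M L).head? := by
    rw [getLast?_seg, head?_seg]
  have hXlast : X.getLast? = some L := by
    rw [hXdef, getLast?_glue hglue1, getLast?_seg]
  have hXhead : X.head? = some s0 := by
    rw [hXdef, List.head?_append_of_ne_nil _ (seg_ne_nil _ _), head?_seg]
  have hXne : X ≠ [] := ne_nil_of_head?' hXhead
  have hchainX : List.Chain' (pathAdj n) X := by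
    rw [hXdef]
    exact chain'_glue hglue1 (chain'_seg hs0n.1 hs0n.2 hMn.1 hMn.2)
      (chain'_seg hMn.1 hMn.2 hLn.1 hLn.2)
  have hglue2 : X.getLast? = (seg L M).head? := by rw [hXlast, head?_seg]
  have hPlast : P.getLast? = some M := by
    rw [hPX, getLast?_glue hglue2, getLast?_seg]
  have hPhead : P.head? = some s0 := by
    rw [hPX, List.head?_append_of_ne_nil _ hXne, hXhead]
  have hPne : P ≠ [] := ne_nil_of_head?' hPhead
  have hchainP : List.Chain' (pathAdj n) P := by
    rw [hPX]
    exact chain'_glue hglue2 hchainX (chain'_seg hLn.1 hLn.2 hMn.1 hMn.2)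
  -- membership in X
  have hXmem : ∀ z, L ≤ z → z ≤ M → z ∈ X := by
    intro z h1 h2
    rcases eq_or_lt_of_le h2 with rfl | hz
    · exact List.mem_append_left _ (mem_seg.2 (by omega))
    · apply List.mem_append_right
      rw [tail_seg_desc (by omega : L < M)]
      exact mem_seg.2 (by omega)
  -- the new ride
  have hdheadM : (π.drop d).head? = some M := by
    rw [head?_drop' hdN, ← hfgetE hdN, hfd]
  have hN'eq : rconcat P (π.drop d) = P ++ π.drop (d+1) := by
    rw [rconcat]
    have h1 : P.getLastD 0 = M := by
      rw [List.getLastD_eq_getLast?, hPlast]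
      rfl
    have h2 : (π.drop d).headD 0 = M := by
      rw [List.headD_eq_head?, hdheadM]
      rfl
    rw [h1, h2, seg_self, show ([M] : List ℕ).tail = [] from rfl, List.append_nil,
      List.tail_drop]
  have hglue3 : P.getLast? = (π.drop d).head? := by rw [hPlast, hdheadM]
  have hdropne : π.drop d ≠ [] := ne_nil_of_head?' hdheadM
  -- Feasibility
  have hfeas : Feasible ⟨pathAdj n, w, s0, t0, C⟩ (rconcat P (π.drop d)) := by
    refine ⟨⟨?_, ?_⟩, ?_, ?_, ?_⟩
    · rw [hN'eq]
      intro hcon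
      rw [List.append_eq_nil_iff] at hcon
      exact hPne hcon.1
    · rw [hN'eq, ← List.tail_drop]
      exact chain'_glue hglue3 hchainP (hchain.drop d)
    · rw [hN'eq, List.head?_append_of_ne_nil _ hPne, hPhead]
    · rw [hN'eq, ← List.tail_drop, getLast?_glue hglue3, getLast?_drop' hdN]
      exact hlast
    · -- satisfaction of all requests
      intro req hreq
      have hsVC : req.1 ∈ VC C := by
        rw [VC, Finset.mem_union]
        exact Or.inl (Finset.mem_image.2 ⟨req, hreq, rfl⟩)
      have htVC : req.2 ∈ VC C := by
        rw [VC, Finset.mem_union]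
        exact Or.inr (Finset.mem_image.2 ⟨req, hreq, rfl⟩)
      have hsL : L ≤ req.1 := hL.2 hsVC
      have htL : L ≤ req.2 := hL.2 htVC
      obtain ⟨i, j, hij, hi, hj⟩ := hsatC req hreq
      obtain ⟨hilt, hival⟩ := List.getElem?_eq_some_iff.1 hi
      obtain ⟨hjlt, hjval⟩ := List.getElem?_eq_some_iff.1 hj
      have hfi : f i = req.1 := by rw [hfgetE hilt]; exact hival
      have hfj : f j = req.2 := by rw [hfgetE hjlt]; exact hjval
      rw [hN'eq]
      by_cases hsM : req.1 ≤ M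
      · by_cases htM : req.2 ≤ M
        · -- both within the prefix
          rcases eq_or_lt_of_le htL with htLeq | htLlt
          · -- req.2 = L : use the last position of X
            rw [hPX, List.append_assoc]
            exact satisfies_append_of_mem_last (hXmem req.1 hsL hsM)
              (by rw [hXlast, htLeq])
          · -- L < req.2 : req.2 lies in (seg L M).tail
            rw [hPX, List.append_assoc]
            apply satisfies_append_of_mem_mem (hXmem req.1 hsL hsM)
            apply List.mem_append_left
            rw [tail_seg_asc (by omega : L < M)]
            exact mem_seg.2 (by omega)
        · -- req.2 > M : any occurrence of req.2 is after d
          push_neg at htM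
          have hjd : d < j := by
            by_contra hcon
            push_neg at hcon
            have := hup j hcon
            omega
          apply satisfies_append_of_mem_getElem? (q := j - d - 1)
          · rw [hPX]
            exact List.mem_append_left _ (hXmem req.1 hsL hsM)
          · rw [List.getElem?_drop, show d + 1 + (j - d - 1) = j from by omega]
            exact hj
      · -- req.1 > M : both occurrences after d
        push_neg at hsM
        have hid : d < i := by
          by_contra hcon
          push_neg at hcon
          have := hup i hcon
          omega
        apply satisfies_suffix (i := i - d - 1) (j := j - d - 1) (by omega)
        · rw [List.getElem?_drop, show d + 1 + (i - d - 1) = i from by omega]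
          exact hi
        · rw [List.getElem?_drop, show d + 1 + (j - d - 1) = j from by omega]
          exact hj
  -- Cost comparison
  set A := π.take (d+1) with hAdef
  have hAlen : A.length = d + 1 := by rw [hAdef, List.length_take]; omega
  have hglueA : A.getLast? = (π.drop d).head? := by
    rw [hAdef, getLast?_take' hdN, hdheadM, ← hfgetE hdN, hfd]
  have hπsplit : A ++ (π.drop d).tail = π := by
    rw [List.tail_drop, hAdef, List.take_append_drop]
  have hcostπ : cost w π = cost w A + cost w (π.drop d) := by
    have h := cost_glue w A (π.drop d) hdropne hglueA
    rwa [hπsplit] at h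
  have hcostN' : cost w (rconcat P (π.drop d)) = cost w P + cost w (π.drop d) := by
    rw [hN'eq, ← List.tail_drop]
    exact cost_glue w P (π.drop d) hdropne hglue3
  -- cost of P
  have hcostP : cost w P = (∑ k ∈ Finset.Ico s0 M, w k (k+1)) +
      ((∑ k ∈ Finset.Ico L M, w k (k+1)) + (∑ k ∈ Finset.Ico L M, w k (k+1))) := by
    have h1 : cost w X = cost w (seg s0 M) + cost w (seg M L) := by
      rw [hXdef]
      exact cost_glue w _ _ (seg_ne_nil _ _) hglue1
    have h2 : cost w P = cost w X + cost w (seg L M) := by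
      rw [hPX]
      exact cost_glue w _ _ (seg_ne_nil _ _) hglue2
    rw [h2, h1, cost_seg w hwsym, cost_seg w hwsym, cost_seg w hwsym,
      min_eq_left hs0M, max_eq_right hs0M, min_eq_right hLM, max_eq_left hLM,
      min_eq_left hLM, max_eq_right hLM]
    ring
  -- cost of A via crossing numbers
  have hcostA : cost w A = ∑ p ∈ Finset.range d, w (f p) (f (p+1)) := by
    rw [cost_eq_sum, hAlen]
    simp only [Nat.add_sub_cancel]
    apply Finset.sum_congr rfl
    intro p hp
    rw [Finset.mem_range] at hp
    rw [hAdef, getD_take' hdN (by omega), getD_take' hdN (by omega)]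
  have hstepd : ∀ p, p < d → (f (p+1) = f p + 1 ∨ f p = f (p+1) + 1) :=
    fun p hp => hstepN p (by omega)
  have hterm : ∀ p, p < d →
      w (f p) (f (p+1)) = w (min (f p) (f (p+1))) (min (f p) (f (p+1)) + 1) := by
    intro p hp
    rcases hstepd p hp with h | h
    · rw [min_eq_left (by omega), h]
    · rw [min_eq_right (by omega), ← h, hwsym]
  have hminlt : ∀ p, p < d → min (f p) (f (p+1)) < n := by
    intro p hp
    have h1 := hbound p (by omega)
    have h2 := hbound (p+1) (by omega)
    rcases hstepd p hp with h | h <;> omega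
  have hcostA2 : cost w A = ∑ k ∈ Finset.range n,
      (((Finset.range d).filter (fun p => min (f p) (f (p+1)) = k)).card : ℚ) * w k (k+1) := by
    rw [hcostA,
      Finset.sum_congr rfl (fun p hp => hterm p (Finset.mem_range.1 hp)),
      ← Finset.sum_fiberwise_of_maps_to
        (fun p hp => Finset.mem_range.2 (hminlt p (Finset.mem_range.1 hp)))
        (fun p => w (min (f p) (f (p+1))) (min (f p) (f (p+1)) + 1))]
    apply Finset.sum_congr rfl
    intro k _
    rw [Finset.sum_congr rfl (g := fun _ => w k (k+1)) (fun p hp => by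
        rw [(Finset.mem_filter.1 hp).2]),
      Finset.sum_const, nsmul_eq_mul]
  -- the crossing-count lower bounds
  have hcard : ∀ k, k ∈ Finset.range n →
      ((if s0 ≤ k ∧ k < M then w k (k+1) else 0) +
        ((if L ≤ k ∧ k < M then w k (k+1) else 0) + (if L ≤ k ∧ k < M then w k (k+1) else 0)))
      ≤ (((Finset.range d).filter (fun p => min (f p) (f (p+1)) = k)).card : ℚ) * w k (k+1) := by
    intro k _
    set S := (Finset.range d).filter (fun p => min (f p) (f (p+1)) = k) with hS
    have hwk := hwpos k (k+1)
    by_cases hkM : k < M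
    · by_cases hks0 : s0 ≤ k
      · by_cases hkL : L ≤ k
        · -- three crossings
          have h3 : 3 ≤ S.card := by
            rcases Nat.lt_or_ge k rv with hkrv | hkrv
            · obtain ⟨q1, hq11, hq12, hq13, hq14⟩ := up_cross f k (show (0:ℕ) ≤ a from by omega)
                (fun p _ hp => hstepN p (by omega)) (by omega) (by omega)
              obtain ⟨q2, hq21, hq22, hq23, hq24⟩ := down_cross f k hal
                (fun p _ hp => hstepN p (by omega)) (by omega) (by rw [hfl]; omega)
              obtain ⟨q3, hq31, hq32, hq33, hq34⟩ := up_cross f k (show l ≤ js from by omega)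
                (fun p _ hp => hstepN p (by omega)) (by rw [hfl]; omega) (by omega)
              have hsub : ({q1, q2, q3} : Finset ℕ) ⊆ S := by
                intro p hp
                simp only [Finset.mem_insert, Finset.mem_singleton] at hp
                rw [hS, Finset.mem_filter, Finset.mem_range]
                rcases hp with rfl | rfl | rfl
                · exact ⟨by omega, by omega⟩
                · exact ⟨by omega, by omega⟩
                · exact ⟨by omega, by omega⟩
              have hcard3 : ({q1, q2, q3} : Finset ℕ).card = 3 := by
                rw [Finset.card_insert_of_notMem (by
                    simp only [Finset.mem_insert, Finset.mem_singleton]; omega),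
                  Finset.card_insert_of_notMem (by
                    simp only [Finset.mem_singleton]; omega),
                  Finset.card_singleton]
              calc 3 = ({q1, q2, q3} : Finset ℕ).card := hcard3.symm
                _ ≤ S.card := Finset.card_le_card hsub
            · obtain ⟨q1, hq11, hq12, hq13, hq14⟩ := up_cross f k (show m1 ≤ js from hjs1)
                (fun p _ hp => hstepN p (by omega)) (by rw [hfm1]; omega) (by omega)
              obtain ⟨q2, hq21, hq22, hq23, hq24⟩ := down_cross f k hjs2
                (fun p _ hp => hstepN p (by omega)) (by omega) (by rw [hfm2]; omega)
              obtain ⟨q3, hq31, hq32, hq33, hq34⟩ := up_cross f k hm2d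
                (fun p _ hp => hstepN p (by omega)) (by rw [hfm2]; omega) (by rw [hfd]; omega)
              have hsub : ({q1, q2, q3} : Finset ℕ) ⊆ S := by
                intro p hp
                simp only [Finset.mem_insert, Finset.mem_singleton] at hp
                rw [hS, Finset.mem_filter, Finset.mem_range]
                rcases hp with rfl | rfl | rfl
                · exact ⟨by omega, by omega⟩
                · exact ⟨by omega, by omega⟩
                · exact ⟨by omega, by omega⟩
              have hcard3 : ({q1, q2, q3} : Finset ℕ).card = 3 := by
                rw [Finset.card_insert_of_notMem (by
                    simp only [Finset.mem_insert, Finset.mem_singleton]; omega),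
                  Finset.card_insert_of_notMem (by
                    simp only [Finset.mem_singleton]; omega),
                  Finset.card_singleton]
              calc 3 = ({q1, q2, q3} : Finset ℕ).card := hcard3.symm
                _ ≤ S.card := Finset.card_le_card hsub
          rw [if_pos ⟨hks0, hkM⟩, if_pos ⟨hkL, hkM⟩]
          have h3' : (3:ℚ) ≤ (S.card : ℚ) := by exact_mod_cast h3
          calc w k (k+1) + (w k (k+1) + w k (k+1)) = 3 * w k (k+1) := by ring
            _ ≤ (S.card : ℚ) * w k (k+1) :=
              mul_le_mul_of_nonneg_right h3' (le_of_lt hwk)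
        · -- k < L : one crossing
          push_neg at hkL
          have h1 : 1 ≤ S.card := by
            obtain ⟨q1, hq11, hq12, hq13, hq14⟩ := up_cross f k (show (0:ℕ) ≤ l from by omega)
              (fun p _ hp => hstepN p (by omega)) (by omega) (by rw [hfl]; omega)
            have hmem : q1 ∈ S := by
              rw [hS, Finset.mem_filter, Finset.mem_range]
              exact ⟨by omega, by omega⟩
            exact Finset.card_pos.2 ⟨q1, hmem⟩
          rw [if_pos ⟨hks0, hkM⟩, if_neg (by omega)]
          have h1' : (1:ℚ) ≤ (S.card : ℚ) := by exact_mod_cast h1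
          calc w k (k+1) + ((0:ℚ) + 0) = 1 * w k (k+1) := by ring
            _ ≤ (S.card : ℚ) * w k (k+1) :=
              mul_le_mul_of_nonneg_right h1' (le_of_lt hwk)
      · by_cases hkL : L ≤ k
        · -- k < s0 : two crossings
          push_neg at hks0
          have h2 : 2 ≤ S.card := by
            obtain ⟨q1, hq11, hq12, hq13, hq14⟩ := down_cross f k (show (0:ℕ) ≤ l from by omega)
              (fun p _ hp => hstepN p (by omega)) (by omega) (by rw [hfl]; omega)
            obtain ⟨q2, hq21, hq22, hq23, hq24⟩ := up_cross f k (show l ≤ js from by omega)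
              (fun p _ hp => hstepN p (by omega)) (by rw [hfl]; omega) (by omega)
            have hsub : ({q1, q2} : Finset ℕ) ⊆ S := by
              intro p hp
              simp only [Finset.mem_insert, Finset.mem_singleton] at hp
              rw [hS, Finset.mem_filter, Finset.mem_range]
              rcases hp with rfl | rfl
              · exact ⟨by omega, by omega⟩
              · exact ⟨by omega, by omega⟩
            have hcard2 : ({q1, q2} : Finset ℕ).card = 2 := by
              rw [Finset.card_insert_of_notMem (by
                  simp only [Finset.mem_singleton]; omega), Finset.card_singleton]
            calc 2 = ({q1, q2} : Finset ℕ).card := hcard2.symm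
              _ ≤ S.card := Finset.card_le_card hsub
          rw [if_neg (by omega), if_pos ⟨hkL, hkM⟩]
          have h2' : (2:ℚ) ≤ (S.card : ℚ) := by exact_mod_cast h2
          calc (0:ℚ) + (w k (k+1) + w k (k+1)) = 2 * w k (k+1) := by ring
            _ ≤ (S.card : ℚ) * w k (k+1) :=
              mul_le_mul_of_nonneg_right h2' (le_of_lt hwk)
        · rw [if_neg (by omega), if_neg (by omega)]
          have h0 : (0:ℚ) ≤ (S.card : ℚ) * w k (k+1) :=
            mul_nonneg (Nat.cast_nonneg _) (le_of_lt hwk)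
          simpa using h0
    · rw [if_neg (by omega), if_neg (by omega)]
      have h0 : (0:ℚ) ≤ (S.card : ℚ) * w k (k+1) :=
        mul_nonneg (Nat.cast_nonneg _) (le_of_lt hwk)
      simpa using h0
  -- assemble the cost inequality
  have hsum1 : (∑ k ∈ Finset.range n, (if s0 ≤ k ∧ k < M then w k (k+1) else 0)) =
      ∑ k ∈ Finset.Ico s0 M, w k (k+1) := by
    have h1 : ∀ k ∈ Finset.range n, (if s0 ≤ k ∧ k < M then w k (k+1) else 0)
        = if k ∈ Finset.Ico s0 M then w k (k+1) else 0 := by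
      intro k _
      simp [Finset.mem_Ico]
    rw [Finset.sum_congr rfl h1, Finset.sum_ite_mem]
    congr 1
    rw [Finset.inter_eq_right]
    intro k hk
    rw [Finset.mem_Ico] at hk
    rw [Finset.mem_range]
    omega
  have hsum2 : (∑ k ∈ Finset.range n, (if L ≤ k ∧ k < M then w k (k+1) else 0)) =
      ∑ k ∈ Finset.Ico L M, w k (k+1) := by
    have h1 : ∀ k ∈ Finset.range n, (if L ≤ k ∧ k < M then w k (k+1) else 0)
        = if k ∈ Finset.Ico L M then w k (k+1) else 0 := by
      intro k _
      simp [Finset.mem_Ico]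
    rw [Finset.sum_congr rfl h1, Finset.sum_ite_mem]
    congr 1
    rw [Finset.inter_eq_right]
    intro k hk
    rw [Finset.mem_Ico] at hk
    rw [Finset.mem_range]
    omega
  have hPA : cost w P ≤ cost w A := by
    rw [hcostP, hcostA2, ← hsum1, ← hsum2, ← Finset.sum_add_distrib, ← Finset.sum_add_distrib]
    exact Finset.sum_le_sum hcard
  -- conclusion
  constructor
  · exact hfeas
  · intro π' hπ'
    have h1 : cost w (rconcat P (π.drop d)) ≤ cost w π := by
      rw [hcostN', hcostπ]
      linarith
    exact le_trans h1 (hmin π' hπ')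


end RideSharing
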